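/- Let a > 0 and b > 0 be real numbers and set c = 6a/b. Define v(τ) = c·sinh⁻²((√a)·τ/2 + log(1+√2)). Then for every τ > 0, the function v satisfies the second-order ordinary differential equation (c − v(τ))·v''(τ) − (1/2)·(v'(τ))² − a·c·v(τ) + (1/3)·b·v(τ)³ = 0. -/

import Mathlib

/-- For `a > 0`, `b > 0`, `c = 6a/b`, the peakon half-profile
`v(τ) = c sinh⁻²(√a τ/2 + log(1+√2))` satisfies, for every `τ > 0`, the once-integrated
profile equation `(c − v)v'' − (1/2)(v')² − a c v + (1/3) b v³ = 0`. -/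
theorem peakon_half_profile_second_order (a b : ℝ) (ha : 0 < a) (hb : 0 < b)
    (c : ℝ) (hc : c = 6 * a / b) (v : ℝ → ℝ)
    (hv : v = fun τ =>
      c / (Real.sinh (Real.sqrt a * τ / 2 + Real.log (1 + Real.sqrt 2))) ^ 2) :
    ∀ τ : ℝ, 0 < τ →
      (c - v τ) * iteratedDeriv 2 v τ - (1 / 2) * (deriv v τ) ^ 2
        - a * c * v τ + (1 / 3) * b * (v τ) ^ 3 = 0 := by
  intro τ hτ
  set w := Real.sqrt a with hwdef
  set L := Real.log (1 + Real.sqrt 2) with hLdef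
  have hw0 : 0 < w := Real.sqrt_pos.mpr ha
  have hw2 : w ^ 2 = a := Real.sq_sqrt ha.le
  have hL0 : 0 < L := Real.log_pos (by nlinarith [Real.sqrt_pos.mpr (by norm_num : (0:ℝ) < 2)])
  -- positivity of sinh on positive arguments
  have hSpos : ∀ t : ℝ, 0 < t → 0 < Real.sinh (w * t / 2 + L) := by
    intro t ht
    exact Real.sinh_pos_iff.mpr (by positivity)
  have hs : ∀ t : ℝ, HasDerivAt (fun u : ℝ => w * u / 2 + L) (w / 2) t := by
    intro t
    have := (((hasDerivAt_id t).const_mul w).div_const 2).add_const L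
    simpa using this
  have hsinh : ∀ t : ℝ, HasDerivAt (fun u : ℝ => Real.sinh (w * u / 2 + L))
      (Real.cosh (w * t / 2 + L) * (w / 2)) t :=
    fun t => (Real.hasDerivAt_sinh _).comp t (hs t)
  have hcosh : ∀ t : ℝ, HasDerivAt (fun u : ℝ => Real.cosh (w * u / 2 + L))
      (Real.sinh (w * t / 2 + L) * (w / 2)) t :=
    fun t => (Real.hasDerivAt_cosh _).comp t (hs t)
  -- first derivative of v at positive points
  have hv1 : ∀ t : ℝ, 0 < t → HasDerivAt v
      (-(c * w) * Real.cosh (w * t / 2 + L) / Real.sinh (w * t / 2 + L) ^ 3) t := by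
    intro t ht
    have hS := (hSpos t ht).ne'
    have hpow : HasDerivAt (fun u : ℝ => Real.sinh (w * u / 2 + L) ^ 2)
        (2 * Real.sinh (w * t / 2 + L) ^ 1 * (Real.cosh (w * t / 2 + L) * (w / 2))) t :=
      (hsinh t).pow 2
    have hdiv := (hasDerivAt_const t c).fun_div hpow (by positivity)
    rw [hv]
    refine hdiv.congr_deriv ?_
    field_simp
    ring
  have hgfun : ∀ t : ℝ, 0 < t → deriv v t =
      -(c * w) * Real.cosh (w * t / 2 + L) / Real.sinh (w * t / 2 + L) ^ 3 :=
    fun t ht => (hv1 t ht).deriv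
  set S := Real.sinh (w * τ / 2 + L) with hSdef
  set C := Real.cosh (w * τ / 2 + L) with hCdef
  have hS0 : 0 < S := hSpos τ hτ
  have hS : S ≠ 0 := hS0.ne'
  have hC2 : C ^ 2 = 1 + S ^ 2 := by rw [hSdef, hCdef, Real.cosh_sq]; ring
  -- second derivative
  have hevent : deriv v =ᶠ[nhds τ] fun t =>
      -(c * w) * Real.cosh (w * t / 2 + L) / Real.sinh (w * t / 2 + L) ^ 3 :=
    Filter.eventuallyEq_of_mem (Ioi_mem_nhds hτ) (fun t ht => hgfun t ht)
  have hg : HasDerivAt (fun t : ℝ =>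
      -(c * w) * Real.cosh (w * t / 2 + L) / Real.sinh (w * t / 2 + L) ^ 3)
      ((-(c * w) * (S * (w / 2)) * S ^ 3 -
        -(c * w) * C * (3 * S ^ 2 * (C * (w / 2)))) / (S ^ 3) ^ 2) τ := by
    have hnum : HasDerivAt (fun t : ℝ => -(c * w) * Real.cosh (w * t / 2 + L))
        (-(c * w) * (S * (w / 2))) τ := (hcosh τ).const_mul _
    have hden : HasDerivAt (fun t : ℝ => Real.sinh (w * t / 2 + L) ^ 3)
        (3 * S ^ 2 * (C * (w / 2))) τ := by
      have : HasDerivAt (fun t : ℝ => Real.sinh (w * t / 2 + L) ^ 3) _ τ := (hsinh τ).pow 3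
      simpa [hSdef, hCdef] using this
    exact hnum.div hden (by positivity)
  have hiter : iteratedDeriv 2 v τ = c * a / 2 * (3 + 2 * S ^ 2) / S ^ 4 := by
    have h1 : iteratedDeriv 2 v τ = deriv (deriv v) τ := by
      simp [iteratedDeriv_succ, iteratedDeriv_one]
    rw [h1, hevent.deriv_eq, hg.deriv]
    field_simp
    linear_combination 3 * c * w ^ 2 * hC2 + c * (2 * S ^ 2 + 3) * hw2
  have hd1 : deriv v τ = -(c * w) * C / S ^ 3 := hgfun τ hτ
  have hvτ : v τ = c / S ^ 2 := by rw [hv]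
  have hd1sq : (deriv v τ) ^ 2 = c ^ 2 * a * (1 + S ^ 2) / S ^ 6 := by
    rw [hd1]
    field_simp
    linear_combination c ^ 2 * w ^ 2 * hC2 + c ^ 2 * (1 + S ^ 2) * hw2
  rw [hiter, hd1sq, hvτ, hc]
  have hb' : b ≠ 0 := hb.ne'
  field_simp
  ring
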